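/- Let S > 0, x ∈ R^d, u a unit vector with ⟨x, u⟩ ≥ S and ‖x − ⟨x,u⟩u‖ ≤ x_∨, and let ε := min(c S²/(4 x_∨), S/8) with c := 7/4 − (9/8)(1/4 + 9/8) > 0, and δ_S ≤ S/8. Then for all δx with ‖δx‖ ≤ δ_S and δw with ‖δw‖ ≤ ε: ‖x + δx‖² > ‖x + δx − S u + δw‖². -/

import Mathlib

/-- For a unit vector `u` with `⟨x,u⟩ ≥ S` and `‖x − ⟨x,u⟩u‖ ≤ x_∨`, with
`ε := min (c S²/(4 x_∨)) (S/8)` where `c := 7/4 − (9/8)(1/4 + 9/8) > 0` and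
`δ_S ≤ S/8`: for all `δx` with `‖δx‖ ≤ δ_S` and `δw` with `‖δw‖ ≤ ε`,
`‖x + δx‖² > ‖x + δx − S u + δw‖²`. -/
theorem stmt_12 {d : ℕ} (S δS xsup : ℝ) (hS : 0 < S) (hδ0 : 0 < δS)
    (hδ : δS ≤ S / 8) (hxsup : 0 < xsup)
    (x u : EuclideanSpace ℝ (Fin d)) (hu : ‖u‖ = 1)
    (hxu : S ≤ (inner ℝ x u : ℝ))
    (hperp : ‖x - (inner ℝ x u : ℝ) • u‖ ≤ xsup) :
    ∀ δx δw : EuclideanSpace ℝ (Fin d), ‖δx‖ ≤ δS →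
      ‖δw‖ ≤ min ((7 / 4 - 9 / 8 * (1 / 4 + 9 / 8)) * S ^ 2 / (4 * xsup)) (S / 8) →
      ‖x + δx - S • u + δw‖ ^ 2 < ‖x + δx‖ ^ 2 := by
  intro δx δw hδx hδw
  have hε1 : ‖δw‖ ≤ (7 / 4 - 9 / 8 * (1 / 4 + 9 / 8)) * S ^ 2 / (4 * xsup) :=
    hδw.trans (min_le_left _ _)
  have hε2 : ‖δw‖ ≤ S / 8 := hδw.trans (min_le_right _ _)
  set y : EuclideanSpace ℝ (Fin d) := x + δx with hy
  set v : EuclideanSpace ℝ (Fin d) := S • u - δw with hv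
  have hrw : x + δx - S • u + δw = y - v := by rw [hy, hv]; abel
  rw [hrw]
  have hnv : ‖v‖ ≤ 9 / 8 * S := by
    calc ‖v‖ ≤ ‖S • u‖ + ‖δw‖ := norm_sub_le _ _
    _ ≤ S + S / 8 := by
        rw [norm_smul, hu, mul_one, Real.norm_eq_abs, abs_of_pos hS]; linarith
    _ = 9 / 8 * S := by ring
  have hnv0 : (0:ℝ) ≤ ‖v‖ := norm_nonneg _
  have expand : ‖y - v‖ ^ 2 = ‖y‖ ^ 2 - 2 * (inner ℝ y v : ℝ) + ‖v‖ ^ 2 :=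
    norm_sub_sq_real y v
  have hsplit : (inner ℝ y v : ℝ) = (inner ℝ x v : ℝ) + (inner ℝ δx v : ℝ) :=
    inner_add_left _ _ _
  have hxv : (inner ℝ x v : ℝ) = S * (inner ℝ x u : ℝ) - (inner ℝ x δw : ℝ) := by
    rw [hv, inner_sub_right, real_inner_smul_right]
  have hxδw : (inner ℝ x δw : ℝ) =
      (inner ℝ (x - (inner ℝ x u : ℝ) • u) δw : ℝ) + (inner ℝ x u : ℝ) * (inner ℝ u δw : ℝ) := by
    rw [inner_sub_left, real_inner_smul_left]; ring
  have h1 : (inner ℝ (x - (inner ℝ x u : ℝ) • u) δw : ℝ) ≤ xsup * ‖δw‖ :=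
    (real_inner_le_norm _ _).trans (mul_le_mul_of_nonneg_right hperp (norm_nonneg _))
  have h1' : xsup * ‖δw‖ ≤ (7 / 4 - 9 / 8 * (1 / 4 + 9 / 8)) * S ^ 2 / 4 := by
    have := mul_le_mul_of_nonneg_left hε1 hxsup.le
    calc xsup * ‖δw‖ ≤ xsup * ((7 / 4 - 9 / 8 * (1 / 4 + 9 / 8)) * S ^ 2 / (4 * xsup)) := this
    _ = (7 / 4 - 9 / 8 * (1 / 4 + 9 / 8)) * S ^ 2 / 4 := by field_simp
  have h2 : (inner ℝ u δw : ℝ) ≤ S / 8 := by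
    have := real_inner_le_norm u δw
    rw [hu, one_mul] at this
    exact this.trans hε2
  have h3 : -(S / 8 * (9 / 8 * S)) ≤ (inner ℝ δx v : ℝ) := by
    have habs : |(inner ℝ δx v : ℝ)| ≤ ‖δx‖ * ‖v‖ := abs_real_inner_le_norm _ _
    have hb : ‖δx‖ * ‖v‖ ≤ S / 8 * (9 / 8 * S) := by
      apply mul_le_mul (hδx.trans hδ) hnv (norm_nonneg _)
      linarith
    have := neg_abs_le (inner ℝ δx v : ℝ)
    linarith [this, habs, hb]
  have key : 7 / 8 * S ^ 2 ≤ (inner ℝ x u : ℝ) * (S - (inner ℝ u δw : ℝ)) := by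
    have hm : S * (7 / 8 * S) ≤ (inner ℝ x u : ℝ) * (S - (inner ℝ u δw : ℝ)) :=
      mul_le_mul hxu (by linarith) (by linarith) (le_trans hS.le hxu)
    linarith [hm]
  have hv2 : ‖v‖ ^ 2 ≤ 81 / 64 * S ^ 2 := by
    have := pow_le_pow_left₀ hnv0 hnv 2
    calc ‖v‖ ^ 2 ≤ (9 / 8 * S) ^ 2 := this
    _ = 81 / 64 * S ^ 2 := by ring
  have h1'' : xsup * ‖δw‖ ≤ 13 / 256 * S ^ 2 := by linarith [h1']
  have h3' : -(9 / 64 * S ^ 2) ≤ (inner ℝ δx v : ℝ) := by linarith [h3]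
  have hxv' : (inner ℝ x v : ℝ) =
      (inner ℝ x u : ℝ) * (S - (inner ℝ u δw : ℝ)) - (inner ℝ (x - (inner ℝ x u : ℝ) • u) δw : ℝ) := by
    rw [hxv, hxδw]; ring
  have hS2 : 0 < S ^ 2 := pow_pos hS 2
  linarith [expand, hsplit, hxv', h1, h1'', key, h3', hv2]
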